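/- For every p ∈ (1, ∞) there is a constant C(p) (one may take C(p) = 2^{(p+1)/p} K₀^{(p−1)/p} (p/(p−1))^{(p−1)/p}) such that for all spectral densities f ∈ L^p and g with integrable logarithms, ‖f⁺ − g⁺‖²_{H²} ≤ 2‖f − g‖_{L¹} + C(p) ‖f‖_{L^p} ‖log f − log g‖_{L¹}^{(p−1)/p}. -/

import Mathlib

open MeasureTheory Set

noncomputable def kolmogorovK : ℝ :=
  (∑' n : ℕ, (1 : ℝ) / (2 * (n : ℝ) + 1) ^ 2) /
    (∑' n : ℕ, (-1 : ℝ) ^ n / (2 * (n : ℝ) + 1) ^ 2)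

lemma summable_shift (a b : ℝ) (ha : 1 ≤ a) (hb : 1 ≤ b) :
    Summable (fun n : ℕ => (1 : ℝ) / (a * (n : ℝ) + b) ^ 2) := by
  have h1 : Summable (fun n : ℕ => (1 : ℝ) / ((n : ℝ) + 1) ^ 2) := by
    have := (summable_nat_add_iff (f := fun n : ℕ => (1 : ℝ) / (n : ℝ) ^ 2) 1).2
      (Real.summable_one_div_nat_pow.2 (by norm_num))
    simpa using this
  refine Summable.of_nonneg_of_le (fun n => by positivity) (fun n => ?_) h1
  have hn : (0:ℝ) ≤ (n:ℝ) := Nat.cast_nonneg n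
  apply one_div_le_one_div_of_le (by positivity)
  have : (n:ℝ) + 1 ≤ a * n + b := by nlinarith
  nlinarith
lemma summable_base : Summable (fun n : ℕ => (1 : ℝ) / (2 * (n : ℝ) + 1) ^ 2) :=
  summable_shift 2 1 one_le_two le_rfl

lemma kolmogorovK_nonneg : 0 ≤ kolmogorovK := by
  unfold kolmogorovK
  apply div_nonneg
  · exact tsum_nonneg fun n => by positivity
  · have s1 : Summable (fun k : ℕ => (1 : ℝ) / (4 * (k : ℝ) + 1) ^ 2) :=
      summable_shift 4 1 (by norm_num) le_rfl
    have s3 : Summable (fun k : ℕ => (1 : ℝ) / (4 * (k : ℝ) + 3) ^ 2) :=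
      summable_shift 4 3 (by norm_num) (by norm_num)
    have he : Summable (fun k : ℕ => (-1 : ℝ) ^ (2 * k) / (2 * ((2 * k : ℕ) : ℝ) + 1) ^ 2) := by
      refine s1.congr fun k => ?_
      have h : (-1 : ℝ) ^ (2 * k) = 1 := by simp [pow_mul]
      rw [h]; push_cast; ring_nf
    have ho : Summable
        (fun k : ℕ => (-1 : ℝ) ^ (2 * k + 1) / (2 * ((2 * k + 1 : ℕ) : ℝ) + 1) ^ 2) := by
      refine (s3.neg).congr fun k => ?_
      have h : (-1 : ℝ) ^ (2 * k + 1) = -1 := by simp [pow_succ, pow_mul]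
      rw [h]; push_cast; ring_nf
    rw [← tsum_even_add_odd (f := fun n : ℕ => (-1 : ℝ) ^ n / (2 * (n : ℝ) + 1) ^ 2) he ho]
    have h1 : (∑' k : ℕ, (-1 : ℝ) ^ (2 * k) / (2 * ((2 * k : ℕ) : ℝ) + 1) ^ 2)
        = ∑' k : ℕ, (1 : ℝ) / (4 * (k : ℝ) + 1) ^ 2 := by
      refine tsum_congr fun k => ?_
      have h : (-1 : ℝ) ^ (2 * k) = 1 := by simp [pow_mul]
      rw [h]; push_cast; ring_nf
    have h2 : (∑' k : ℕ, (-1 : ℝ) ^ (2 * k + 1) / (2 * ((2 * k + 1 : ℕ) : ℝ) + 1) ^ 2)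
        = - ∑' k : ℕ, (1 : ℝ) / (4 * (k : ℝ) + 3) ^ 2 := by
      rw [← tsum_neg]
      refine tsum_congr fun k => ?_
      have h : (-1 : ℝ) ^ (2 * k + 1) = -1 := by simp [pow_succ, pow_mul]
      rw [h]; push_cast; ring_nf
    rw [h1, h2, ← sub_eq_add_neg, sub_nonneg]
    refine Summable.tsum_le_tsum (fun k => ?_) s3 s1
    have hk : (0:ℝ) ≤ (k:ℝ) := Nat.cast_nonneg k
    apply one_div_le_one_div_of_le (by positivity)
    nlinarith


lemma normSq_sub_exp (u v a b : ℝ) :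
    ‖(u : ℂ) * Complex.exp (Complex.I * (a : ℂ)) -
      (v : ℂ) * Complex.exp (Complex.I * (b : ℂ))‖ ^ 2 =
      u ^ 2 + v ^ 2 - 2 * u * v * Real.cos (a - b) := by
  rw [mul_comm Complex.I (a:ℂ), mul_comm Complex.I (b:ℂ), Complex.exp_mul_I,
    Complex.exp_mul_I]
  have h : ∀ z : ℂ, ‖z‖ ^ 2 = Complex.normSq z := fun z => by
    rw [← Complex.sq_norm]
  rw [h, Complex.normSq_apply]
  simp only [Complex.sub_re, Complex.sub_im, Complex.mul_re, Complex.mul_im,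
    Complex.add_re, Complex.add_im, Complex.ofReal_re, Complex.ofReal_im,
    Complex.cos_ofReal_re, Complex.cos_ofReal_im, Complex.sin_ofReal_re,
    Complex.sin_ofReal_im, Complex.I_re, Complex.I_im, Complex.mul_re, Complex.mul_im]
  rw [Real.cos_sub]
  nlinarith [Real.sin_sq_add_cos_sq a, Real.sin_sq_add_cos_sq b]

lemma key_pointwise (fv gv c : ℝ) (hf : 0 ≤ fv) (hg : 0 ≤ gv) (hc1 : c ≤ 1) (hc2 : -1 ≤ c) :
    fv + gv - 2 * Real.sqrt fv * Real.sqrt gv * c ≤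
      2 * |fv - gv| + 2 * fv * (1 - c) := by
  set u := Real.sqrt fv with hus
  set v := Real.sqrt gv with hvs
  have hu : 0 ≤ u := Real.sqrt_nonneg _
  have hv : 0 ≤ v := Real.sqrt_nonneg _
  have hu2 : u ^ 2 = fv := Real.sq_sqrt hf
  have hv2 : v ^ 2 = gv := Real.sq_sqrt hg
  rcases abs_cases (fv - gv) with ⟨h1, h2⟩ | ⟨h1, h2⟩ <;> rw [h1]
  · have huv : v ≤ u := by rw [hus, hvs]; exact Real.sqrt_le_sqrt (by linarith)
    have hpos : (0:ℝ) ≤ 3 * (u + v) - 2 * u * c := by nlinarith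
    nlinarith [mul_nonneg (sub_nonneg.2 huv) hpos]
  · have huv : u ≤ v := by rw [hus, hvs]; exact Real.sqrt_le_sqrt (by linarith)
    have hpos : (0:ℝ) ≤ v + u + 2 * u * c := by nlinarith
    nlinarith [mul_nonneg (sub_nonneg.2 huv) hpos]


lemma one_sub_cos_le_integral (t : ℝ) (ht : 0 ≤ t) :
    1 - Real.cos t ≤
      ∫ lam in Ioc (0:ℝ) Real.pi, (if lam ≤ t then Real.sin lam else 0) := by
  have hπ : 0 < Real.pi := Real.pi_pos
  set c := min Real.pi t with hc
  have hc0 : 0 ≤ c := le_min hπ.le ht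
  have h0 : (fun lam => if lam ≤ t then Real.sin lam else 0)
      = (Iic t).indicator Real.sin := by
    ext lam; simp [Set.indicator_apply]
  have hset : Ioc (0:ℝ) Real.pi ∩ Iic t = Ioc 0 c := by
    ext lam
    simp only [mem_inter_iff, mem_Ioc, mem_Iic, hc, le_min_iff, mem_setOf_eq]
    tauto
  have h1 : (∫ lam in Ioc (0:ℝ) Real.pi, (if lam ≤ t then Real.sin lam else 0))
      = ∫ lam in Ioc (0:ℝ) c, Real.sin lam := by
    rw [h0, setIntegral_indicator measurableSet_Iic, hset]
  have h2 : (∫ lam in Ioc (0:ℝ) c, Real.sin lam) = 1 - Real.cos c := by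
    rw [← intervalIntegral.integral_of_le hc0, integral_sin, Real.cos_zero]
  rw [h1, h2]
  have : Real.cos c ≤ Real.cos t := by
    rcases le_total t Real.pi with h | h
    · simp [hc, min_eq_right h]
    · rw [hc, min_eq_left h, Real.cos_pi]; exact Real.neg_one_le_cos t
  linarith

set_option maxHeartbeats 1000000 in
/-- Corollary (Lᵖ version): for `p ∈ (1, ∞)` and
`C(p) = 2^{(p+1)/p} K₀^{(p−1)/p} (p/(p−1))^{(p−1)/p}`,
`‖f⁺ − g⁺‖²_{H²} ≤ 2‖f − g‖_{L¹} + C(p)‖f‖_{Lᵖ}‖log f − log g‖_{L¹}^{(p−1)/p}`.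
`F, G` are the boundary values of `f⁺, g⁺` with `A = (log f)~`, `B = (log g)~`,
and `kolmogorovK` is the Kolmogorov weak (1,1) constant, hypothesized for
`½(log f − log g)` and its conjugate `½(A − B)`; `K₀ = (kolmogorovK/2)∫₀^π sin λ/λ dλ`. -/
theorem stmt11 (p : ℝ) (hp : 1 < p)
    (f g : ℝ → ℝ)
    (hf0 : ∀ θ, 0 ≤ f θ) (hg0 : ∀ θ, 0 ≤ g θ)
    (hf : IntegrableOn f (Ico (-Real.pi) Real.pi))
    (hg : IntegrableOn g (Ico (-Real.pi) Real.pi))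
    (hfp : IntegrableOn (fun θ => f θ ^ p) (Ico (-Real.pi) Real.pi))
    (hlogf : IntegrableOn (fun θ => Real.log (f θ)) (Ico (-Real.pi) Real.pi))
    (hlogg : IntegrableOn (fun θ => Real.log (g θ)) (Ico (-Real.pi) Real.pi))
    (A B : ℝ → ℝ) (hA : Measurable A) (hB : Measurable B)
    (hweak : ∀ lam > (0 : ℝ),
      volume {θ ∈ Ico (-Real.pi) Real.pi | lam ≤ |(A θ - B θ) / 2|} ≤
        ENNReal.ofReal ((kolmogorovK / lam) *
          ∫ θ in Ico (-Real.pi) Real.pi, |(Real.log (f θ) - Real.log (g θ)) / 2|))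
    (F G : ℝ → ℂ)
    (hF : ∀ θ, F θ = (Real.sqrt (f θ) : ℂ) * Complex.exp (Complex.I * (A θ : ℂ) / 2))
    (hG : ∀ θ, G θ = (Real.sqrt (g θ) : ℂ) * Complex.exp (Complex.I * (B θ : ℂ) / 2)) :
    ∫ θ in Ico (-Real.pi) Real.pi, ‖F θ - G θ‖ ^ 2 ≤
      2 * (∫ θ in Ico (-Real.pi) Real.pi, |f θ - g θ|) +
      (2 ^ ((p + 1) / p) *
          (kolmogorovK / 2 * ∫ lam in (0 : ℝ)..Real.pi, Real.sin lam / lam) ^ ((p - 1) / p) *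
          (p / (p - 1)) ^ ((p - 1) / p)) *
        (∫ θ in Ico (-Real.pi) Real.pi, f θ ^ p) ^ (1 / p) *
        (∫ θ in Ico (-Real.pi) Real.pi,
            |Real.log (f θ) - Real.log (g θ)|) ^ ((p - 1) / p) := by
  have hπ : (0:ℝ) < Real.pi := Real.pi_pos
  set s : Set ℝ := Ico (-Real.pi) Real.pi with hsdef
  have hsm : MeasurableSet s := measurableSet_Ico
  have hsfin : volume s ≠ ⊤ := measure_Ico_lt_top.ne
  haveI : IsFiniteMeasure (volume.restrict s) :=
    ⟨by rw [Measure.restrict_apply_univ]; exact lt_top_iff_ne_top.2 hsfin⟩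
  set q : ℝ := p / (p - 1) with hqdef
  have hp0 : (0:ℝ) < p := lt_trans one_pos hp
  have hp1 : (0:ℝ) < p - 1 := by linarith
  have hpq : p.HolderConjugate q := (Real.holderConjugate_iff_eq_conjExponent hp).2 rfl
  have hq1 : 1 < q := hpq.symm.lt
  have hq0 : (0:ℝ) < q := hpq.symm.pos
  -- the conjugate phase and the function h
  set φ : ℝ → ℝ := fun θ => (A θ - B θ) / 2 with hφdef
  have hφm : Measurable φ := ((hA.sub hB).div_const 2)
  set h : ℝ → ℝ := fun θ => 1 - Real.cos ((A θ - B θ) / 2) with hhdef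
  have hhm : Measurable h := (measurable_const.sub (Real.measurable_cos.comp hφm))
  have hh0 : ∀ θ, 0 ≤ h θ := fun θ => by
    simp only [hhdef, sub_nonneg]; exact Real.cos_le_one _
  have hh2 : ∀ θ, h θ ≤ 2 := fun θ => by
    have := Real.neg_one_le_cos ((A θ - B θ) / 2)
    simp only [hhdef]; linarith
  -- notation for the key integrals
  set L : ℝ := ∫ θ in s, |Real.log (f θ) - Real.log (g θ)| with hLdef
  have hL0 : 0 ≤ L := integral_nonneg fun θ => abs_nonneg _
  set K0 : ℝ := kolmogorovK / 2 * ∫ lam in (0:ℝ)..Real.pi, Real.sin lam / lam with hK0def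
  have hIsin : 0 ≤ ∫ lam in (0:ℝ)..Real.pi, Real.sin lam / lam := by
    apply intervalIntegral.integral_nonneg hπ.le
    intro u hu
    exact div_nonneg (Real.sin_nonneg_of_nonneg_of_le_pi hu.1 hu.2) hu.1
  have hK00 : 0 ≤ K0 := by
    apply mul_nonneg (by linarith [kolmogorovK_nonneg]) hIsin
  -- Step 1: pointwise bound
  have step1 : ∀ θ, ‖F θ - G θ‖ ^ 2 ≤ 2 * |f θ - g θ| + 2 * f θ * h θ := by
    intro θ
    have e1 : Complex.I * (A θ : ℂ) / 2 = Complex.I * ((A θ / 2 : ℝ) : ℂ) := by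
      push_cast; ring
    have e2 : Complex.I * (B θ : ℂ) / 2 = Complex.I * ((B θ / 2 : ℝ) : ℂ) := by
      push_cast; ring
    have e3 : A θ / 2 - B θ / 2 = (A θ - B θ) / 2 := by ring
    rw [hF θ, hG θ, e1, e2, normSq_sub_exp, e3, Real.sq_sqrt (hf0 θ), Real.sq_sqrt (hg0 θ)]
    have := key_pointwise (f θ) (g θ) (Real.cos ((A θ - B θ)/2)) (hf0 θ) (hg0 θ)
      (Real.cos_le_one _) (Real.neg_one_le_cos _)
    simpa only [hhdef] using this
  -- basic integrability
  have hfm : AEMeasurable f (volume.restrict s) := hf.aemeasurable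
  have int_abs : IntegrableOn (fun θ => |f θ - g θ|) s := (hf.sub hg).abs
  have int_fh : IntegrableOn (fun θ => f θ * h θ) s := by
    refine Integrable.mono' (hf.const_mul 2) (hfm.mul hhm.aemeasurable).aestronglyMeasurable ?_
    filter_upwards with θ
    rw [Real.norm_eq_abs, abs_mul, abs_of_nonneg (hf0 θ), abs_of_nonneg (hh0 θ)]
    calc f θ * h θ ≤ f θ * 2 := mul_le_mul_of_nonneg_left (hh2 θ) (hf0 θ)
    _ = 2 * f θ := by ring
  have hFm : AEMeasurable F (volume.restrict s) := by
    have : F = fun θ => (Real.sqrt (f θ) : ℂ) * Complex.exp (Complex.I * (A θ : ℂ) / 2) :=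
      funext hF
    rw [this]
    exact ((Complex.measurable_ofReal.comp_aemeasurable
        (Real.continuous_sqrt.measurable.comp_aemeasurable hfm)).mul
      (Complex.measurable_exp.comp (((measurable_const.mul
        (Complex.measurable_ofReal.comp hA))).div_const 2)).aemeasurable)
  have hGm : AEMeasurable G (volume.restrict s) := by
    have : G = fun θ => (Real.sqrt (g θ) : ℂ) * Complex.exp (Complex.I * (B θ : ℂ) / 2) :=
      funext hG
    rw [this]
    exact ((Complex.measurable_ofReal.comp_aemeasurable
        (Real.continuous_sqrt.measurable.comp_aemeasurable hg.aemeasurable)).mul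
      (Complex.measurable_exp.comp (((measurable_const.mul
        (Complex.measurable_ofReal.comp hB))).div_const 2)).aemeasurable)
  have int_FG : IntegrableOn (fun θ => ‖F θ - G θ‖ ^ 2) s := by
    refine Integrable.mono' ((int_abs.const_mul 2).add (int_fh.const_mul 2))
      (((hFm.sub hGm).norm.pow_const 2).aestronglyMeasurable) ?_
    filter_upwards with θ
    rw [Real.norm_eq_abs, abs_of_nonneg (by positivity)]
    show ‖F θ - G θ‖ ^ 2 ≤ 2 * |f θ - g θ| + 2 * (f θ * h θ)
    linarith [step1 θ]
  -- Step 2: integrate the pointwise bound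
  have step2 : ∫ θ in s, ‖F θ - G θ‖ ^ 2 ≤
      2 * (∫ θ in s, |f θ - g θ|) + 2 * ∫ θ in s, f θ * h θ := by
    calc ∫ θ in s, ‖F θ - G θ‖ ^ 2
        ≤ ∫ θ in s, (2 * |f θ - g θ| + 2 * (f θ * h θ)) := by
          refine integral_mono int_FG ((int_abs.const_mul 2).add (int_fh.const_mul 2))
            fun θ => ?_
          show ‖F θ - G θ‖ ^ 2 ≤ 2 * |f θ - g θ| + 2 * (f θ * h θ)
          linarith [step1 θ]
      _ = 2 * (∫ θ in s, |f θ - g θ|) + 2 * ∫ θ in s, f θ * h θ := by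
          rw [integral_add (int_abs.const_mul 2) (int_fh.const_mul 2),
            integral_const_mul, integral_const_mul]
  -- Step 3: layer cake bound  ∫ h ≤ K0 * L
  have int_h : IntegrableOn h s := by
    refine Integrable.mono' (integrable_const 2) hhm.aestronglyMeasurable ?_
    filter_upwards with θ
    rw [Real.norm_eq_abs, abs_of_nonneg (hh0 θ)]; exact hh2 θ
  have hL2 : (∫ θ in s, |(Real.log (f θ) - Real.log (g θ)) / 2|) = L / 2 := by
    have e : ∀ θ, |(Real.log (f θ) - Real.log (g θ)) / 2|
        = |Real.log (f θ) - Real.log (g θ)| / 2 := fun θ => by rw [abs_div, abs_two]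
    simp_rw [e]
    rw [integral_div]
  have step3 : ∫ θ in s, h θ ≤ K0 * L := by
    set ν := volume.restrict (Ioc (0:ℝ) Real.pi) with hνdef
    haveI : IsFiniteMeasure ν :=
      ⟨by rw [hνdef, Measure.restrict_apply_univ]; exact measure_Ioc_lt_top⟩
    set W : ℝ × ℝ → ℝ :=
      fun z => if z.2 ≤ |(A z.1 - B z.1) / 2| then Real.sin z.2 else 0 with hWdef
    have hTm : MeasurableSet {z : ℝ × ℝ | z.2 ≤ |(A z.1 - B z.1) / 2|} :=
      measurableSet_le measurable_snd
        (((hA.comp measurable_fst).sub (hB.comp measurable_fst)).div_const 2).abs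
    have hWm : Measurable W :=
      Measurable.ite hTm (Real.measurable_sin.comp measurable_snd) measurable_const
    have hWint : Integrable W ((volume.restrict s).prod ν) := by
      refine Integrable.mono' (integrable_const 1) hWm.aestronglyMeasurable ?_
      filter_upwards with z
      rw [Real.norm_eq_abs, hWdef]
      dsimp only
      split_ifs with hz
      · exact abs_le.2 ⟨Real.neg_one_le_sin _, Real.sin_le_one _⟩
      · simp
    have hpt : ∀ θ, h θ ≤ ∫ lam, W (θ, lam) ∂ν := by
      intro θ
      have h1 := one_sub_cos_le_integral |(A θ - B θ) / 2| (abs_nonneg _)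
      calc h θ = 1 - Real.cos |(A θ - B θ) / 2| := by
            simp only [hhdef]; rw [Real.cos_abs]
        _ ≤ ∫ lam in Ioc (0:ℝ) Real.pi,
              (if lam ≤ |(A θ - B θ) / 2| then Real.sin lam else 0) := h1
        _ = ∫ lam, W (θ, lam) ∂ν := rfl
    have int_inner : Integrable (fun θ => ∫ lam, W (θ, lam) ∂ν) (volume.restrict s) :=
      hWint.integral_prod_left
    have swap : ∫ θ in s, (∫ lam, W (θ, lam) ∂ν) = ∫ lam, (∫ θ in s, W (θ, lam)) ∂ν :=
      integral_integral_swap hWint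
    -- inner integral computation
    have hTlam : ∀ lam : ℝ, MeasurableSet {θ : ℝ | lam ≤ |(A θ - B θ) / 2|} := fun lam =>
      measurableSet_le measurable_const ((hA.sub hB).div_const 2).abs
    have inner_eq : ∀ lam : ℝ, (∫ θ in s, W (θ, lam)) =
        Real.sin lam * (volume (s ∩ {θ : ℝ | lam ≤ |(A θ - B θ) / 2|})).toReal := by
      intro lam
      have e1 : (fun θ => W (θ, lam)) =
          fun θ => ({θ : ℝ | lam ≤ |(A θ - B θ) / 2|}.indicator
            (fun _ => Real.sin lam)) θ := by
        funext θ
        rw [hWdef, Set.indicator_apply]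
        rfl
      rw [e1, setIntegral_indicator (hTlam lam), setIntegral_const, smul_eq_mul, mul_comm]; rfl
    have meas_bound : ∀ lam ∈ Ioc (0:ℝ) Real.pi,
        (volume (s ∩ {θ : ℝ | lam ≤ |(A θ - B θ) / 2|})).toReal ≤
          kolmogorovK / lam * (L / 2) := by
      intro lam hlam
      have hw := hweak lam hlam.1
      rw [hL2] at hw
      refine ENNReal.toReal_le_of_le_ofReal
        (mul_nonneg (div_nonneg kolmogorovK_nonneg hlam.1.le) (by linarith)) ?_
      exact hw
    have int1 : IntegrableOn (fun lam => (∫ θ in s, W (θ, lam))) (Ioc (0:ℝ) Real.pi) :=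
      hWint.integral_prod_right
    have int2 : IntegrableOn
        (fun lam => Real.sin lam / lam * (kolmogorovK * (L / 2))) (Ioc (0:ℝ) Real.pi) := by
      refine Integrable.mono' (integrable_const (kolmogorovK * (L / 2)))
        (((Real.measurable_sin.div measurable_id).mul_const _).aestronglyMeasurable) ?_
      rw [ae_restrict_iff' measurableSet_Ioc]
      filter_upwards with lam hlam
      have h1 : (0:ℝ) < lam := hlam.1
      have h2 : Real.sin lam / lam ≤ 1 :=
        (div_le_one h1).2 (Real.sin_le h1.le)
      have h3 : 0 ≤ Real.sin lam / lam :=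
        div_nonneg (Real.sin_nonneg_of_nonneg_of_le_pi h1.le hlam.2) h1.le
      rw [Real.norm_eq_abs, abs_mul, abs_of_nonneg h3,
        abs_of_nonneg (mul_nonneg kolmogorovK_nonneg (by linarith))]
      nlinarith [mul_nonneg kolmogorovK_nonneg (show (0:ℝ) ≤ L/2 by linarith)]
    have mono : ∫ lam, (∫ θ in s, W (θ, lam)) ∂ν ≤
        ∫ lam in Ioc (0:ℝ) Real.pi, Real.sin lam / lam * (kolmogorovK * (L / 2)) := by
      refine setIntegral_mono_on int1 int2 measurableSet_Ioc fun lam hlam => ?_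
      rw [inner_eq lam]
      have hsin : 0 ≤ Real.sin lam :=
        Real.sin_nonneg_of_nonneg_of_le_pi hlam.1.le hlam.2
      calc Real.sin lam * (volume (s ∩ {θ : ℝ | lam ≤ |(A θ - B θ) / 2|})).toReal
          ≤ Real.sin lam * (kolmogorovK / lam * (L / 2)) :=
            mul_le_mul_of_nonneg_left (meas_bound lam hlam) hsin
        _ = Real.sin lam / lam * (kolmogorovK * (L / 2)) := by
            field_simp
    have final_eq : (∫ lam in Ioc (0:ℝ) Real.pi,
        Real.sin lam / lam * (kolmogorovK * (L / 2))) = K0 * L := by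
      rw [integral_mul_const, hK0def,
        ← intervalIntegral.integral_of_le hπ.le]
      ring
    calc ∫ θ in s, h θ ≤ ∫ θ in s, (∫ lam, W (θ, lam) ∂ν) :=
        integral_mono int_h int_inner hpt
      _ = ∫ lam, (∫ θ in s, W (θ, lam)) ∂ν := swap
      _ ≤ ∫ lam in Ioc (0:ℝ) Real.pi, Real.sin lam / lam * (kolmogorovK * (L / 2)) := mono
      _ = K0 * L := final_eq
  -- Step 4: Hölder
  have int_hq : IntegrableOn (fun θ => h θ ^ q) s := by
    refine Integrable.mono' (integrable_const ((2:ℝ) ^ q)) ?_ ?_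
    · exact ((Real.continuous_rpow_const hq0.le).measurable.comp hhm).aestronglyMeasurable
    · filter_upwards with θ
      rw [Real.norm_eq_abs, abs_of_nonneg (Real.rpow_nonneg (hh0 θ) q)]
      exact Real.rpow_le_rpow (hh0 θ) (hh2 θ) hq0.le
  have hMf : MemLp f (ENNReal.ofReal p) (volume.restrict s) := by
    have hne : (ENNReal.ofReal p) ≠ 0 := by
      simp only [ne_eq, ENNReal.ofReal_eq_zero, not_le]; exact hp0
    refine (memLp_norm_rpow_iff (q := ENNReal.ofReal p)
      hf.aestronglyMeasurable hne ENNReal.ofReal_ne_top).1 ?_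
    rw [ENNReal.div_self hne ENNReal.ofReal_ne_top, memLp_one_iff_integrable]
    refine hfp.congr ?_
    filter_upwards with θ
    rw [Real.norm_eq_abs, abs_of_nonneg (hf0 θ), ENNReal.toReal_ofReal hp0.le]
  have hMh : MemLp h (ENNReal.ofReal q) (volume.restrict s) := by
    refine MemLp.mono_exponent ?_ (le_top)
    exact memLp_top_of_bound hhm.aestronglyMeasurable 2
      (by filter_upwards with θ; rw [Real.norm_eq_abs, abs_of_nonneg (hh0 θ)]; exact hh2 θ)
  have holder : ∫ θ in s, f θ * h θ ≤
      (∫ θ in s, f θ ^ p) ^ (1/p) * (∫ θ in s, h θ ^ q) ^ (1/q) :=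
    integral_mul_le_Lp_mul_Lq_of_nonneg hpq
      (Filter.Eventually.of_forall hf0) (Filter.Eventually.of_forall hh0) hMf hMh
  -- Step 5: ∫ h^q ≤ 2^(q-1) ∫ h
  have step5 : ∫ θ in s, h θ ^ q ≤ 2 ^ (q - 1) * ∫ θ in s, h θ := by
    rw [← integral_const_mul]
    refine integral_mono int_hq (int_h.const_mul _) fun θ => ?_
    have h1 : h θ ^ q = h θ ^ (q - 1) * h θ := by
      rcases eq_or_lt_of_le (hh0 θ) with h0 | h0
      · rw [← h0, Real.zero_rpow (by positivity : q ≠ 0), mul_zero]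
      · conv_lhs => rw [show q = q - 1 + 1 by ring, Real.rpow_add_one h0.ne']
    rw [h1]
    refine mul_le_mul_of_nonneg_right ?_ (hh0 θ)
    exact Real.rpow_le_rpow (hh0 θ) (hh2 θ) (by linarith)
  -- Step 6: finish
  have hIp0 : (0:ℝ) ≤ ∫ θ in s, f θ ^ p :=
    integral_nonneg fun θ => Real.rpow_nonneg (hf0 θ) p
  have hIq0 : (0:ℝ) ≤ ∫ θ in s, h θ ^ q :=
    integral_nonneg fun θ => Real.rpow_nonneg (hh0 θ) q
  have e1q : 1 / q = (p - 1) / p := by rw [hqdef]; field_simp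
  have eq1 : (q - 1) / q = 1 / p := by rw [hqdef]; field_simp; ring
  have hIqb : (∫ θ in s, h θ ^ q) ^ (1/q) ≤
      2 ^ ((q-1)/q) * (K0 ^ ((p-1)/p) * L ^ ((p-1)/p)) := by
    have h1 : (∫ θ in s, h θ ^ q) ≤ 2 ^ (q-1) * (K0 * L) :=
      le_trans step5 (by
        have := mul_le_mul_of_nonneg_left step3 (by positivity : (0:ℝ) ≤ (2:ℝ) ^ (q-1))
        linarith)
    calc (∫ θ in s, h θ ^ q) ^ (1/q) ≤ (2 ^ (q-1) * (K0 * L)) ^ (1/q) :=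
        Real.rpow_le_rpow hIq0 h1 (by positivity)
      _ = 2 ^ ((q-1)/q) * (K0 ^ (1/q) * L ^ (1/q)) := by
        rw [Real.mul_rpow (by positivity) (mul_nonneg hK00 hL0),
          Real.mul_rpow hK00 hL0, ← Real.rpow_mul (by norm_num : (0:ℝ) ≤ 2)]
        rw [show (q-1) * (1/q) = (q-1)/q by ring]
      _ = 2 ^ ((q-1)/q) * (K0 ^ ((p-1)/p) * L ^ ((p-1)/p)) := by rw [e1q]
  have main : 2 * ∫ θ in s, f θ * h θ ≤
      (2 ^ ((p + 1) / p) * K0 ^ ((p - 1) / p) * q ^ ((p - 1) / p)) *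
        (∫ θ in s, f θ ^ p) ^ (1 / p) * L ^ ((p - 1) / p) := by
    have hq1' : (1:ℝ) ≤ q ^ ((p-1)/p) :=
      Real.one_le_rpow hq1.le (by positivity)
    have c1 : 2 * ∫ θ in s, f θ * h θ ≤
        2 * ((∫ θ in s, f θ ^ p) ^ (1/p) * (2 ^ ((q-1)/q) * (K0 ^ ((p-1)/p) * L ^ ((p-1)/p)))) := by
      have := mul_le_mul_of_nonneg_left
        (mul_le_mul_of_nonneg_left hIqb (Real.rpow_nonneg hIp0 (1/p)))
        (by norm_num : (0:ℝ) ≤ 2)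
      have h2 := mul_le_mul_of_nonneg_left holder (by norm_num : (0:ℝ) ≤ 2)
      calc 2 * ∫ θ in s, f θ * h θ
          ≤ 2 * ((∫ θ in s, f θ ^ p) ^ (1/p) * (∫ θ in s, h θ ^ q) ^ (1/q)) := h2
        _ ≤ _ := this
    have e2 : 2 * (2:ℝ) ^ ((q-1)/q) = (2:ℝ) ^ ((p+1)/p) := by
      rw [eq1, show (p+1)/p = 1 + 1/p by field_simp,
        Real.rpow_add (by norm_num : (0:ℝ) < 2), Real.rpow_one]
    calc 2 * ∫ θ in s, f θ * h θ
        ≤ 2 * ((∫ θ in s, f θ ^ p) ^ (1/p) *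
            (2 ^ ((q-1)/q) * (K0 ^ ((p-1)/p) * L ^ ((p-1)/p)))) := c1
      _ = (2 ^ ((p+1)/p) * K0 ^ ((p-1)/p)) * (∫ θ in s, f θ ^ p) ^ (1/p) * L ^ ((p-1)/p) := by
          rw [← e2]; ring
      _ ≤ (2 ^ ((p+1)/p) * K0 ^ ((p-1)/p) * q ^ ((p-1)/p)) *
            (∫ θ in s, f θ ^ p) ^ (1/p) * L ^ ((p-1)/p) := by
          have hnn : (0:ℝ) ≤ (2:ℝ) ^ ((p+1)/p) * K0 ^ ((p-1)/p) *
              ((∫ θ in s, f θ ^ p) ^ (1/p) * L ^ ((p-1)/p)) := by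
            have := Real.rpow_nonneg hK00 ((p-1)/p)
            have := Real.rpow_nonneg hIp0 (1/p)
            have := Real.rpow_nonneg hL0 ((p-1)/p)
            positivity
          nlinarith [mul_le_mul_of_nonneg_left hq1' hnn]
  calc ∫ θ in s, ‖F θ - G θ‖ ^ 2
      ≤ 2 * (∫ θ in s, |f θ - g θ|) + 2 * ∫ θ in s, f θ * h θ := step2
    _ ≤ 2 * (∫ θ in s, |f θ - g θ|) +
        (2 ^ ((p + 1) / p) * K0 ^ ((p - 1) / p) * q ^ ((p - 1) / p)) *
          (∫ θ in s, f θ ^ p) ^ (1 / p) * L ^ ((p - 1) / p) := by linarith [main]
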